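/- For every positive integer d, every v ∈ {0,1}^d with e_{d−1} ≺_rlex v (so that P(v) is full-dimensional in ℝ^d), and every i ∈ {0,…,d−1}: the inequality x_i ≤ 1 defines a facet of P(v) if and only if neither of the following holds: (first exception) s(v) = 2 and i ∈ Sig(v); (second exception) sig_2(v) < d−2 and sig_2(v) < i ≤ d−1. -/
import Mathlib


open Finset

/-- The set of 0/1-vectors in ℝ^d. -/
def ZeroOne (d : ℕ) : Set (Fin d → ℝ) := {x | ∀ i, x i = 0 ∨ x i = 1}

/-- `x` is reverse-lexicographically smaller than `y`:
there is an index `m` with `x m < y m` and `x i = y i` for all `i > m`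
(equivalently, `x m < y m` for `m` the largest index where `x` and `y` differ). -/
def RlexLt {d : ℕ} (x y : Fin d → ℝ) : Prop :=
  ∃ m : Fin d, x m < y m ∧ ∀ i : Fin d, m < i → x i = y i

/-- `X(v)`: the 0/1-points revlex-smaller than `v`. -/
def Xset {d : ℕ} (v : Fin d → ℝ) : Set (Fin d → ℝ) :=
  {x | x ∈ ZeroOne d ∧ RlexLt x v}

/-- The revlex-initial 0/1-polytope `P(v) = conv X(v)`. -/
noncomputable def Pset {d : ℕ} (v : Fin d → ℝ) : Set (Fin d → ℝ) :=
  convexHull ℝ (Xset v)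

/-- `Sig(v)`: the support of `v` (the indices of its one-entries). -/
noncomputable def Sig {d : ℕ} (v : Fin d → ℝ) : Finset (Fin d) :=
  @Finset.filter (Fin d) (fun i => v i = 1) (Classical.decPred _) Finset.univ

/-- `Sig_{>i}(v)`: the elements of `Sig(v)` above `i`. -/
noncomputable def SigGt {d : ℕ} (v : Fin d → ℝ) (i : Fin d) : Finset (Fin d) :=
  (Sig v).filter (fun j => i < j)

/-- The dimension of the affine hull of a set in ℝ^d. -/
noncomputable def adim {d : ℕ} (s : Set (Fin d → ℝ)) : ℕ :=
  Module.finrank ℝ (affineSpan ℝ s).direction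

/-- A face of a polytope: a convex extreme subset. -/
def IsFaceOf {d : ℕ} (P F : Set (Fin d → ℝ)) : Prop :=
  Convex ℝ F ∧ IsExtreme ℝ P F

/-- The number of indices satisfying a predicate. -/
noncomputable def cnt {d : ℕ} (p : Fin d → Prop) : ℕ :=
  (@Finset.filter (Fin d) p (Classical.decPred _) Finset.univ).card

/- ===== auxiliary machinery ===== -/

lemma hull_le {d : ℕ} (X : Set (Fin d → ℝ)) (f : (Fin d → ℝ) →ₗ[ℝ] ℝ) (b : ℝ)
    (h : ∀ y ∈ X, f y ≤ b) : ∀ x ∈ convexHull ℝ X, f x ≤ b := fun _x hx =>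
  convexHull_min h (convex_halfSpace_le f.isLinear b) hx

lemma hull_ge {d : ℕ} (X : Set (Fin d → ℝ)) (f : (Fin d → ℝ) →ₗ[ℝ] ℝ) (b : ℝ)
    (h : ∀ y ∈ X, b ≤ f y) : ∀ x ∈ convexHull ℝ X, b ≤ f x := fun _x hx =>
  convexHull_min h (convex_halfSpace_ge f.isLinear b) hx

lemma adim_le_fixed {d : ℕ} (S : Set (Fin d → ℝ)) (E : Finset (Fin d)) (c : Fin d → ℝ)
    (h : ∀ x ∈ S, ∀ j ∈ E, x j = c j) : adim S ≤ d - E.card := by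
  classical
  set π : (Fin d → ℝ) →ₗ[ℝ] (E → ℝ) := LinearMap.pi (fun j => LinearMap.proj (j : Fin d)) with hπ
  have hsurj : Function.Surjective π := by
    intro f
    refine ⟨fun j => if hj : j ∈ E then f ⟨j, hj⟩ else 0, ?_⟩
    funext j
    simp [hπ, LinearMap.pi_apply, j.2]
  have hker : (affineSpan ℝ S).direction ≤ LinearMap.ker π := by
    rw [direction_affineSpan, vectorSpan_def]
    refine Submodule.span_le.2 ?_
    rintro u hu
    obtain ⟨x, hx, y, hy, rfl⟩ := Set.mem_vsub.1 hu
    simp only [SetLike.mem_coe, LinearMap.mem_ker]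
    funext j
    simp [hπ, LinearMap.pi_apply, vsub_eq_sub, h x hx j j.2, h y hy j j.2]
  have hrn := LinearMap.finrank_range_add_finrank_ker π
  rw [LinearMap.range_eq_top.2 hsurj, finrank_top] at hrn
  have h1 : Module.finrank ℝ (E → ℝ) = E.card := by
    rw [Module.finrank_fintype_fun_eq_card, Fintype.card_coe]
  have h2 : Module.finrank ℝ (Fin d → ℝ) = d := by
    rw [Module.finrank_fintype_fun_eq_card, Fintype.card_fin]
  have h3 := Submodule.finrank_mono hker
  unfold adim
  omega

lemma adim_le_d {d : ℕ} (S : Set (Fin d → ℝ)) : adim S ≤ d := by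
  have := Submodule.finrank_le (affineSpan ℝ S).direction
  rwa [Module.finrank_fintype_fun_eq_card, Fintype.card_fin] at this

lemma adim_ge_single {d : ℕ} (S : Set (Fin d → ℝ)) (p₀ : Fin d → ℝ) (hp : p₀ ∈ S)
    (J : Finset (Fin d)) (hpts : ∀ j ∈ J, p₀ + Pi.single j 1 ∈ S) :
    J.card ≤ adim S := by
  classical
  set fam : J → (Fin d → ℝ) := fun j => Pi.single (j : Fin d) 1 with hfam
  have hli : LinearIndependent ℝ fam := by
    have hb : LinearIndependent ℝ (fun j : Fin d => Pi.single j (1:ℝ)) := by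
      have := (Pi.basisFun ℝ (Fin d)).linearIndependent
      convert this using 1
      funext j
      rw [Pi.basisFun_apply]
    exact hb.comp (fun j : J => (j : Fin d)) Subtype.val_injective
  have hspan : Submodule.span ℝ (Set.range fam) ≤ (affineSpan ℝ S).direction := by
    refine Submodule.span_le.2 ?_
    rintro u ⟨j, rfl⟩
    have h1 : p₀ + Pi.single (j : Fin d) 1 ∈ affineSpan ℝ S :=
      subset_affineSpan ℝ S (hpts j j.2)
    have h2 : p₀ ∈ affineSpan ℝ S := subset_affineSpan ℝ S hp
    have := AffineSubspace.vsub_mem_direction h1 h2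
    simpa [hfam, vsub_eq_sub] using this
  have := Submodule.finrank_mono hspan
  rw [finrank_span_eq_card hli, Fintype.card_coe] at this
  exact this

/-- Sum of two coordinate projections, as a linear functional. -/
noncomputable def proj2 {d : ℕ} (a b : Fin d) : (Fin d → ℝ) →ₗ[ℝ] ℝ where
  toFun z := z a + z b
  map_add' x y := by simp only [Pi.add_apply]; ring
  map_smul' c x := by simp only [Pi.smul_apply, smul_eq_mul, RingHom.id_apply]; ring

lemma proj2_apply {d : ℕ} (a b : Fin d) (z : Fin d → ℝ) : proj2 a b z = z a + z b := rfl

/-- Characteristic vector of a finite set of coordinates. -/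
noncomputable def chi {d : ℕ} (A : Finset (Fin d)) : Fin d → ℝ :=
  fun j => if j ∈ A then 1 else 0

lemma chi_mem_zeroOne {d : ℕ} (A : Finset (Fin d)) : chi A ∈ ZeroOne d := by
  intro j
  by_cases h : j ∈ A <;> simp [chi, h]

lemma chi_add_single {d : ℕ} (A : Finset (Fin d)) (j : Fin d) (hj : j ∉ A) :
    chi A + Pi.single j 1 = chi (insert j A) := by
  classical
  funext k
  by_cases hk : k = j
  · subst hk
    simp [chi, hj, Pi.single_eq_same]
  · simp [chi, Pi.single_eq_of_ne hk, Finset.mem_insert, hk]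

lemma memX_gen {d : ℕ} (v : Fin d → ℝ) (hv : v ∈ ZeroOne d) (A : Finset (Fin d))
    (m : Fin d) (hm : v m = 1) (hmA : m ∉ A)
    (habove : ∀ j : Fin d, m < j → (j ∈ A ↔ v j = 1)) :
    chi A ∈ Xset v := by
  refine ⟨chi_mem_zeroOne A, m, by simp [chi, hmA, hm], ?_⟩
  intro j hj
  by_cases hjA : j ∈ A
  · simp [chi, hjA, ((habove j hj).1 hjA).symm]
  · have hvj : v j = 0 := by
      rcases hv j with h | h
      · exact h
      · exact absurd ((habove j hj).2 h) hjA
    simp [chi, hjA, hvj]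

/-- for full-dimensional `P(v)` and every coordinate `i`, the inequality
`x_i ≤ 1` defines a facet of `P(v)` iff neither `s(v) = 2 ∧ i ∈ Sig(v)` nor
`sig_2(v) < d−2 ∧ sig_2(v) < i ≤ d−1` holds (`sig` being the decreasing
enumeration of `Sig(v)`). -/
theorem stmt5 (d : ℕ) (hd : 0 < d) (v : Fin d → ℝ) (hv : v ∈ ZeroOne d)
    (hfull : RlexLt (Pi.single (⟨d - 1, by omega⟩ : Fin d) (1 : ℝ)) v)
    (w : ℕ) (hw : w = (Sig v).card)
    (sig : ℕ → Fin d)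
    (hanti : StrictAntiOn sig (Set.Icc 1 w))
    (himg : ∀ j : Fin d, j ∈ Sig v ↔ ∃ q, 1 ≤ q ∧ q ≤ w ∧ sig q = j)
    (i : Fin d) :
    ((∀ x ∈ Pset v, x i ≤ 1) ∧ adim {x ∈ Pset v | x i = 1} = adim (Pset v) - 1)
    ↔ ¬(((Sig v).card = 2 ∧ i ∈ Sig v) ∨
        ((sig 2 : ℕ) < d - 2 ∧ (sig 2 : ℕ) < (i : ℕ) ∧ (i : ℕ) ≤ d - 1)) := by
  classical
  set l : Fin d := ⟨d - 1, by omega⟩ with hldef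
  have hlval : (l : ℕ) = d - 1 := rfl
  have hfull' : RlexLt (Pi.single l (1 : ℝ)) v := hfull
  obtain ⟨m₀, hm₀1, hm₀2⟩ := hfull'
  clear_value l
  have hm₀l : m₀ ≠ l := by
    intro h
    rw [h, Pi.single_eq_same] at hm₀1
    rcases hv l with h0 | h0 <;> rw [h0] at hm₀1 <;> linarith
  have hm₀lt : m₀ < l := by
    rw [Fin.lt_def, hlval]
    have h1 := m₀.isLt
    have h2 : (m₀ : ℕ) ≠ d - 1 := fun hh => hm₀l (Fin.ext (by omega))
    omega
  have hvl : v l = 1 := by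
    rw [← hm₀2 l hm₀lt, Pi.single_eq_same]
  have hvm₀ : v m₀ = 1 := by
    rw [Pi.single_eq_of_ne hm₀l] at hm₀1
    rcases hv m₀ with h0 | h0
    · rw [h0] at hm₀1; linarith
    · exact h0
  have hd2 : 2 ≤ d := by
    have h1 := Fin.lt_def.1 hm₀lt
    rw [hlval] at h1
    omega
  have hmemSig : ∀ j : Fin d, j ∈ Sig v ↔ v j = 1 := by
    intro j; simp [Sig]
  have hlSig : l ∈ Sig v := (hmemSig l).2 hvl
  have hm₀Sig : m₀ ∈ Sig v := (hmemSig m₀).2 hvm₀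
  have hw2 : 2 ≤ (Sig v).card := Finset.one_lt_card.2 ⟨m₀, hm₀Sig, l, hlSig, hm₀l⟩
  have hwge : 2 ≤ w := by omega
  have hsigmem : ∀ q, 1 ≤ q → q ≤ w → sig q ∈ Sig v :=
    fun q h1 h2 => (himg _).2 ⟨q, h1, h2, rfl⟩
  have hsig1 : sig 1 = l := by
    obtain ⟨q, hq1, hq2, hq3⟩ := (himg l).1 hlSig
    have hle : sig 1 ≤ l := Fin.le_def.2 (by have := (sig 1).isLt; omega)
    rcases eq_or_lt_of_le hq1 with h | h
    · rw [← h] at hq3; exact hq3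
    · have hlt := hanti (Set.mem_Icc.2 ⟨le_refl 1, by omega⟩) (Set.mem_Icc.2 ⟨hq1, hq2⟩) h
      rw [hq3] at hlt
      exact absurd (lt_of_lt_of_le hlt hle) (lt_irrefl l)
  set t : Fin d := sig 2 with htdef
  clear_value t
  have htSig : t ∈ Sig v := by rw [htdef]; exact hsigmem 2 (by omega) hwge
  have hvt : v t = 1 := (hmemSig t).1 htSig
  have htl : t < l := by
    rw [← hsig1, htdef]
    exact hanti (Set.mem_Icc.2 ⟨le_refl 1, by omega⟩) (Set.mem_Icc.2 ⟨one_le_two, hwge⟩) one_lt_two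
  have htlv : (t : ℕ) < d - 1 := by
    have := Fin.lt_def.1 htl
    omega
  have hSigle : ∀ j : Fin d, v j = 1 → j = l ∨ j ≤ t := by
    intro j hj
    obtain ⟨q, hq1, hq2, rfl⟩ := (himg j).1 ((hmemSig j).2 hj)
    rcases eq_or_lt_of_le hq1 with h | h
    · left; rw [← h]; exact hsig1
    · right
      rw [htdef]
      exact hanti.antitoneOn (Set.mem_Icc.2 ⟨one_le_two, hwge⟩) (Set.mem_Icc.2 ⟨hq1, hq2⟩) h
  have hw2eq : (Sig v).card = 2 → ∀ j : Fin d, v j = 1 → j = t ∨ j = l := by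
    intro hc j hj
    obtain ⟨q, hq1, hq2, rfl⟩ := (himg j).1 ((hmemSig j).2 hj)
    have hq2' : q ≤ 2 := by omega
    clear hq2
    interval_cases q
    · right; exact hsig1
    · left; exact htdef.symm
  -- the key structural facts about points of X(v) with last coordinate 1
  have hD : ∀ y ∈ Xset v, y l = 1 → ∀ j : Fin d, t < j → j ≠ l → y j = 0 := by
    rintro y ⟨hy01, m, hm1, hm2⟩ hyl j htj hjl
    have hml : m ≠ l := by
      rintro rfl
      rw [hyl, hvl] at hm1; linarith
    have hym : y m = 0 ∧ v m = 1 := by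
      rcases hy01 m with h | h <;> rcases hv m with h' | h' <;>
        rw [h, h'] at hm1 <;> first | (exact ⟨h, h'⟩) | linarith
    have hmt : m ≤ t := (hSigle m hym.2).resolve_left hml
    rw [hm2 j (lt_of_le_of_lt hmt htj)]
    rcases hv j with h | h
    · exact h
    · rcases hSigle j h with h' | h'
      · exact absurd h' hjl
      · exact absurd htj (not_lt.2 h')
  have hD2 : (Sig v).card = 2 → ∀ y ∈ Xset v, y l = 1 → y t = 0 := by
    rintro hc y ⟨hy01, m, hm1, hm2⟩ hyl
    have hml : m ≠ l := by
      rintro rfl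
      rw [hyl, hvl] at hm1; linarith
    have hym : y m = 0 ∧ v m = 1 := by
      rcases hy01 m with h | h <;> rcases hv m with h' | h' <;>
        rw [h, h'] at hm1 <;> first | (exact ⟨h, h'⟩) | linarith
    have hmt : m = t := (hw2eq hc m hym.2).resolve_right hml
    rw [← hmt]; exact hym.1
  -- hull inequalities
  have hPle1 : ∀ j : Fin d, ∀ x ∈ Pset v, x j ≤ 1 := by
    intro j
    refine hull_le _ (LinearMap.proj j) 1 ?_
    intro y hy
    rcases hy.1 j with h | h <;> simp [LinearMap.proj_apply, h]
  have hPge0 : ∀ j : Fin d, ∀ x ∈ Pset v, 0 ≤ x j := by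
    intro j
    refine hull_ge _ (LinearMap.proj j) 0 ?_
    intro y hy
    rcases hy.1 j with h | h <;> simp [LinearMap.proj_apply, h]
  have key : ∀ a b : Fin d, (∀ y ∈ Xset v, y a = 1 → y b = 0) →
      ∀ x ∈ Pset v, x a = 1 → x b = 0 := by
    intro a b hab x hx hxa
    have hsum : ∀ y ∈ Xset v, proj2 a b y ≤ 1 := by
      intro y hy
      rw [proj2_apply]
      rcases hy.1 a with h | h
      · rcases hy.1 b with h' | h' <;> rw [h, h'] <;> norm_num
      · rw [h, hab y hy h]; norm_num
    have h1 := hull_le _ (proj2 a b) 1 hsum x hx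
    rw [proj2_apply, hxa] at h1
    have h2 := hPge0 b x hx
    linarith
  -- basic point memberships
  have hXsubP : Xset v ⊆ Pset v := subset_convexHull ℝ _
  have hnotabove : ∀ j : Fin d, ¬ l < j := by
    intro j hj
    have h1 := j.isLt
    have h2 := Fin.lt_def.1 hj
    rw [hlval] at h2
    omega
  have hA : ∀ A : Finset (Fin d), l ∉ A → chi A ∈ Xset v := by
    intro A hlA
    exact memX_gen v hv A l hvl hlA (fun j hj => absurd hj (hnotabove j))
  have hchi_l : chi {l} ∈ Xset v := by
    have hps : Pi.single l (1:ℝ) = chi {l} := by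
      funext j
      by_cases h : j = l
      · subst h; simp [chi, Pi.single_eq_same]
      · simp [chi, h, Pi.single_eq_of_ne h]
    refine ⟨chi_mem_zeroOne {l}, ?_⟩
    rw [← hps]
    exact ⟨m₀, hm₀1, hm₀2⟩
  -- the "B"-type membership: sets contained in {l} ∪ [0,t)
  have hB : ∀ A : Finset (Fin d), l ∈ A → (∀ j ∈ A, j = l ∨ j < t) → chi A ∈ Xset v := by
    intro A hlA hAel
    refine memX_gen v hv A t hvt ?_ ?_
    · intro h
      rcases hAel t h with h' | h'
      · exact absurd (Fin.lt_def.1 htl) (by rw [h']; omega)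
      · exact lt_irrefl t h'
    · intro k hk
      constructor
      · intro hkA
        rcases hAel k hkA with rfl | h'
        · exact hvl
        · exact absurd hk (not_lt.2 h'.le)
      · intro hvk
        rcases hSigle k hvk with rfl | h'
        · exact hlA
        · exact absurd hk (not_lt.2 h')
  -- the "C"-type membership: {t, l} when the support has at least 3 elements
  have hC : 3 ≤ (Sig v).card → chi (insert t {l}) ∈ Xset v := by
    intro hw3
    have hw3' : 3 ≤ w := by omega
    have huSig : v (sig 3) = 1 := (hmemSig _).1 (hsigmem 3 (by omega) hw3')
    have hut : sig 3 < t := by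
      rw [htdef]
      exact hanti (Set.mem_Icc.2 ⟨one_le_two, hwge⟩) (Set.mem_Icc.2 ⟨by omega, hw3'⟩) (by omega)
    refine memX_gen v hv _ (sig 3) huSig ?_ ?_
    · intro h
      rcases Finset.mem_insert.1 h with h' | h'
      · rw [h'] at hut; exact lt_irrefl t hut
      · rw [Finset.mem_singleton] at h'
        rw [h'] at hut
        exact absurd (hut.trans htl) (lt_irrefl l)
    · intro k hk
      constructor
      · intro hkA
        rcases Finset.mem_insert.1 hkA with rfl | h'
        · exact hvt
        · rw [Finset.mem_singleton] at h'; rw [h']; exact hvl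
      · intro hvk
        obtain ⟨q, hq1, hq2, rfl⟩ := (himg k).1 ((hmemSig k).2 hvk)
        have hq3 : q < 3 := by
          by_contra hq3c
          push_neg at hq3c
          have hle : sig q ≤ sig 3 := hanti.antitoneOn (Set.mem_Icc.2 ⟨by omega, hw3'⟩)
            (Set.mem_Icc.2 ⟨hq1, hq2⟩) hq3c
          exact absurd hk (not_lt.2 hle)
        have hq1' : 1 ≤ q := hq1
        clear hq2
        interval_cases q
        · rw [hsig1]; exact Finset.mem_insert.2 (Or.inr (Finset.mem_singleton_self l))
        · rw [← htdef]; exact Finset.mem_insert_self t {l}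
  -- full-dimensionality
  have hPdim : adim (Pset v) = d := by
    refine le_antisymm (adim_le_d _) ?_
    have h0 : chi (∅ : Finset (Fin d)) ∈ Pset v :=
      hXsubP (hA ∅ (Finset.notMem_empty l))
    have hstep : ∀ j ∈ (Finset.univ : Finset (Fin d)),
        chi (∅ : Finset (Fin d)) + Pi.single j 1 ∈ Pset v := by
      intro j _
      rw [chi_add_single ∅ j (Finset.notMem_empty j)]
      by_cases hjl : j = l
      · subst hjl; exact hXsubP hchi_l
      · refine hXsubP (hA _ ?_)
        simp [Finset.mem_insert, Ne.symm hjl]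
    have := adim_ge_single (Pset v) (chi ∅) h0 Finset.univ hstep
    rwa [Finset.card_univ, Fintype.card_fin] at this
  constructor
  · -- forward: facet → no exception
    rintro ⟨hvalid, hdim⟩ hexc
    rw [hPdim] at hdim
    revert hdim
    have hface_le : ∃ b : Fin d, b ≠ i ∧ ∀ x ∈ Pset v, x i = 1 → x b = 0 := by
      rcases hexc with ⟨hc2, hiSig⟩ | ⟨ht2, hti, _⟩
      · rcases hw2eq hc2 i ((hmemSig i).1 hiSig) with hit | hil
        · -- i = t : take b = l
          refine ⟨l, by rw [hit]; exact ne_of_gt htl, ?_⟩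
          rw [hit]
          refine key t l ?_
          intro y hy hyt
          rcases hy.1 l with h | h
          · exact h
          · have h0 := hD2 hc2 y hy h
            rw [h0] at hyt; norm_num at hyt
        · -- i = l : take b = t
          refine ⟨t, by rw [hil]; exact ne_of_lt htl, ?_⟩
          rw [hil]
          exact key l t (fun y hy hyl => hD2 hc2 y hy hyl)
      · by_cases hil : i = l
        · have hbb : (t : ℕ) + 1 < d := by omega
          have hnel : (⟨(t : ℕ) + 1, hbb⟩ : Fin d) ≠ l := by
            refine Fin.ne_of_val_ne ?_
            show (t : ℕ) + 1 ≠ (l : ℕ)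
            omega
          refine ⟨⟨(t : ℕ) + 1, hbb⟩, by rw [hil]; exact hnel, ?_⟩
          rw [hil]
          refine key l _ ?_
          intro y hy hyl
          exact hD y hy hyl _ (Fin.lt_def.2 (Nat.lt_succ_self _)) hnel
        · refine ⟨l, fun h => hil h.symm, key i l ?_⟩
          intro y hy hyi
          rcases hy.1 l with h | h
          · exact h
          · have h0 := hD y hy h i (Fin.lt_def.2 hti) hil
            rw [h0] at hyi; norm_num at hyi
    obtain ⟨b, hbi, hb⟩ := hface_le
    have hle : adim {x ∈ Pset v | x i = 1} ≤ d - 2 := by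
      have h := adim_le_fixed {x ∈ Pset v | x i = 1} {i, b}
        (fun k => if k = i then 1 else 0) ?_
      · rwa [Finset.card_pair (Ne.symm hbi)] at h
      · rintro x ⟨hx, hxi⟩ k hk
        rcases Finset.mem_insert.1 hk with rfl | hk
        · simp [hxi]
        · rw [Finset.mem_singleton] at hk; subst hk
          simp [hbi, hb x hx hxi]
    intro hdim
    rw [hdim] at hle
    clear hdim
    omega
  · -- backward: no exception → facet
    intro hexc
    have h1 : ¬((Sig v).card = 2 ∧ i ∈ Sig v) := fun h => hexc (Or.inl h)
    have h2 : ¬((t : ℕ) < d - 2 ∧ (t : ℕ) < (i : ℕ)) := fun h =>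
      hexc (Or.inr ⟨h.1, h.2, by have := i.isLt; omega⟩)
    refine ⟨hPle1 i, ?_⟩
    rw [hPdim]
    refine le_antisymm ?_ ?_
    · have h := adim_le_fixed {x ∈ Pset v | x i = 1} {i} (fun _ => 1) ?_
      · simpa using h
      · rintro x ⟨hx, hxi⟩ k hk
        rw [Finset.mem_singleton] at hk; subst hk
        exact hxi
    · -- the point constructions
      have hins : ∀ j : Fin d, j ≠ i → chi (insert j {i}) ∈ Xset v := by
        intro j hji
        by_cases hil : i = l
        · rw [hil]
          rw [hil] at hji h1 h2
          have htval : (t : ℕ) = d - 2 := by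
            have hlt := Fin.lt_def.1 htl
            rcases Nat.lt_or_ge (t : ℕ) (d - 2) with h | h
            · exact absurd ⟨h, by omega⟩ h2
            · omega
          have hw3 : 3 ≤ (Sig v).card := by
            rcases Nat.lt_or_ge 2 (Sig v).card with h | h
            · omega
            · exact absurd ⟨by omega, hlSig⟩ h1
          have hjle : j = t ∨ j < t := by
            have hjv := j.isLt
            have hjnl : (j : ℕ) ≠ d - 1 := fun hh => hji (Fin.ext (by omega))
            rcases Nat.lt_or_ge (j : ℕ) (t : ℕ) with h | h
            · right; exact Fin.lt_def.2 h
            · left; exact Fin.ext (by omega)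
          rcases hjle with hjt | hjt
          · rw [hjt]; exact hC hw3
          · refine hB _ (Finset.mem_insert.2 (Or.inr (Finset.mem_singleton_self l))) ?_
            intro k hk
            rcases Finset.mem_insert.1 hk with rfl | hk
            · right; exact hjt
            · rw [Finset.mem_singleton] at hk; left; exact hk
        · have hival : (i : ℕ) < d - 1 := by
            have hiv := i.isLt
            have hh : (i : ℕ) ≠ d - 1 := fun hh => hil (Fin.ext (by omega))
            omega
          have hit : i ≤ t := by
            by_contra hcon
            push_neg at hcon
            exact h2 ⟨by have := Fin.lt_def.1 hcon; omega, Fin.lt_def.1 hcon⟩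
          by_cases hjl : j = l
          · rw [hjl]
            rcases lt_or_eq_of_le hit with hitlt | hiteq
            · refine hB _ (Finset.mem_insert_self l {i}) ?_
              intro k hk
              rcases Finset.mem_insert.1 hk with rfl | hk
              · left; rfl
              · rw [Finset.mem_singleton] at hk; rw [hk]; right; exact hitlt
            · have hw3 : 3 ≤ (Sig v).card := by
                rcases Nat.lt_or_ge 2 (Sig v).card with h | h
                · omega
                · refine absurd ⟨by omega, ?_⟩ h1
                  rw [hiteq]; exact htSig
              rw [hiteq, Finset.pair_comm l t]
              exact hC hw3
          · refine hA _ ?_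
            simp [Finset.mem_insert, Ne.symm hjl, Ne.symm hil]
      have hp₀ : chi {i} ∈ Xset v := by
        by_cases hil : i = l
        · subst hil; exact hchi_l
        · exact hA {i} (by simp [Ne.symm hil])
      have hmem : chi {i} ∈ {x ∈ Pset v | x i = 1} :=
        ⟨hXsubP hp₀, by simp [chi]⟩
      have hstep : ∀ j ∈ Finset.univ.erase i,
          chi {i} + Pi.single j 1 ∈ {x ∈ Pset v | x i = 1} := by
        intro j hj
        have hji : j ≠ i := (Finset.mem_erase.1 hj).1
        rw [chi_add_single {i} j (by simp [hji])]
        refine ⟨hXsubP (hins j hji), ?_⟩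
        simp [chi, Finset.mem_insert]
      have h := adim_ge_single {x ∈ Pset v | x i = 1} (chi {i}) hmem
        (Finset.univ.erase i) hstep
      rwa [Finset.card_erase_of_mem (Finset.mem_univ i), Finset.card_univ,
        Fintype.card_fin] at h
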